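/- Let G be a finite non-abelian group and x ∈ G such that the order of xZ(G) in G/Z(G) is divisible by a prime p. Then d(⟨x⟩, G) < d(⟨x^p⟩, G). -/

import Mathlib

/-- The relative commutativity degree `d(H,G)` of a subgroup `H` of a group `G`. -/
noncomputable def relCommDeg {G : Type*} [Group G] (H : Subgroup G) : ℚ :=
  (Nat.card {p : H × G // (p.1 : G) * p.2 = p.2 * (p.1 : G)} : ℚ) /
    ((Nat.card H : ℚ) * (Nat.card G : ℚ))

/-- The set `D(G)` of all relative commutativity degrees of `G`. -/
noncomputable def commDegSet (G : Type*) [Group G] : Set ℚ :=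
  {q | ∃ H : Subgroup G, relCommDeg H = q}

open Subgroup

lemma zpowersIsCyclic {G : Type*} [Group G] (x : G) : IsCyclic (zpowers x) := by
  refine ⟨⟨⟨x, mem_zpowers x⟩, fun y => ?_⟩⟩
  obtain ⟨k, hk⟩ := mem_zpowers_iff.mp y.2
  exact mem_zpowers_iff.mpr ⟨k, Subtype.ext (by simpa using hk)⟩

lemma cardPowEqLe {C : Type*} [Group C] [IsCyclic C] [Finite C]
    (hcomm : ∀ a b : C, a * b = b * a) {p : ℕ} (hp : 0 < p) (c : C) :
    Nat.card {h : C // h ^ p = c} ≤ p := by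
  classical
  rcases isEmpty_or_nonempty {h : C // h ^ p = c} with he | hne
  · simp [Nat.card_of_isEmpty]
  · obtain ⟨⟨h1, hh1⟩⟩ := hne
    have hinj : Function.Injective
        (fun a : {h : C // h ^ p = c} =>
          (⟨a.1 * h1⁻¹, by
            have hc : Commute a.1 h1⁻¹ := hcomm a.1 h1⁻¹
            rw [hc.mul_pow, a.2, inv_pow, hh1, mul_inv_cancel]⟩ : {h : C // h ^ p = 1})) := by
      intro a b hab
      have := congrArg Subtype.val hab
      simp only [mul_left_inj] at this
      exact Subtype.ext this
    refine (Nat.card_le_card_of_injective _ hinj).trans ?_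
    letI := Fintype.ofFinite C
    rw [Nat.card_eq_fintype_card, Fintype.card_subtype]
    convert IsCyclic.card_pow_eq_one_le (α := C) hp using 2

lemma cardLtOfFibers {A B : Type*} [Finite A] [Finite B] (f : A → B) (k : ℕ)
    (hle : ∀ b, Nat.card {a // f a = b} ≤ k) (b₀ : B) (hlt : Nat.card {a // f a = b₀} < k) :
    Nat.card A < k * Nat.card B := by
  classical
  letI := Fintype.ofFinite A
  letI := Fintype.ofFinite B
  rw [Nat.card_eq_fintype_card, Nat.card_eq_fintype_card]
  have h1 : Fintype.card A = ∑ b : B, Fintype.card {a // f a = b} := by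
    rw [← Fintype.card_sigma]
    exact (Fintype.card_congr (Equiv.sigmaFiberEquiv f)).symm
  rw [h1]
  have h2 : ∑ b : B, Fintype.card {a // f a = b} < ∑ _b : B, k := by
    refine Finset.sum_lt_sum (fun b _ => ?_) ⟨b₀, Finset.mem_univ _, ?_⟩
    · simpa [Nat.card_eq_fintype_card] using hle b
    · simpa [Nat.card_eq_fintype_card] using hlt
  simpa [Finset.sum_const, mul_comm] using h2

theorem relCommDeg_zpowers_lt_of_prime_dvd (G : Type*) [Group G] [Finite G]
    (hG : ¬ ∀ a b : G, a * b = b * a) (x : G) (p : ℕ) (hp : p.Prime)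
    (hdvd : p ∣ orderOf (QuotientGroup.mk x : G ⧸ Subgroup.center G)) :
    relCommDeg (Subgroup.zpowers x) < relCommDeg (Subgroup.zpowers (x ^ p)) := by
  classical
  have hp1 := hp.one_lt
  have hp0 := hp.pos
  set r := orderOf (QuotientGroup.mk x : G ⧸ Subgroup.center G) with hr
  have hr0 : 0 < r := orderOf_pos _
  have hrn : r ∣ orderOf x := by
    simpa using orderOf_map_dvd (QuotientGroup.mk' (Subgroup.center G)) x
  have hpn : p ∣ orderOf x := hdvd.trans hrn
  have hn0 : 0 < orderOf x := orderOf_pos x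
  have hrp : p * (r / p) = r := Nat.mul_div_cancel' hdvd
  have hrp0 : 0 < r / p := Nat.div_pos (Nat.le_of_dvd hr0 hdvd) hp0
  set h0 : G := x ^ (r / p) with hh0
  -- h0 is not central
  have h0_not_center : h0 ∉ Subgroup.center G := by
    intro hmem
    have h1 : (QuotientGroup.mk x : G ⧸ Subgroup.center G) ^ (r / p) = 1 := by
      rw [← QuotientGroup.mk_pow]
      exact (QuotientGroup.eq_one_iff _).mpr hmem
    have hdvd2 := orderOf_dvd_of_pow_eq_one h1
    rw [← hr] at hdvd2
    exact absurd (Nat.le_of_dvd hrp0 hdvd2) (not_le.mpr (Nat.div_lt_self hr0 hp1))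
  obtain ⟨g₀, hg₀⟩ : ∃ g, ¬ (g * h0 = h0 * g) := by
    by_contra hcon
    push_neg at hcon
    exact h0_not_center (Subgroup.mem_center_iff.mpr hcon)
  have hxr_center : x ^ r ∈ Subgroup.center G := by
    rw [← QuotientGroup.eq_one_iff]
    rw [QuotientGroup.mk_pow]
    exact pow_orderOf_eq_one _
  -- subgroups
  have hle : zpowers (x ^ p) ≤ zpowers x :=
    zpowers_le.mpr (mem_zpowers_iff.mpr ⟨(p : ℤ), zpow_natCast x p⟩)
  have hmemp : ∀ h : zpowers x, ((h : G)) ^ p ∈ zpowers (x ^ p) := by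
    intro h
    obtain ⟨k, hk⟩ := mem_zpowers_iff.mp h.2
    refine mem_zpowers_iff.mpr ⟨k, ?_⟩
    rw [← hk, ← zpow_natCast x p, ← zpow_mul, ← zpow_natCast (x ^ (k : ℤ)) p, ← zpow_mul,
      mul_comm]
  haveI := zpowersIsCyclic x
  -- the p-to-one map on commuting pairs
  set f : {q : (zpowers x) × G // (q.1 : G) * q.2 = q.2 * (q.1 : G)} →
      {q : (zpowers (x ^ p)) × G // (q.1 : G) * q.2 = q.2 * (q.1 : G)} :=
    fun a => ⟨(⟨(a.1.1 : G) ^ p, hmemp a.1.1⟩, a.1.2),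
      ((show Commute (a.1.1 : G) a.1.2 from a.2).pow_left p)⟩ with hf
  have hcomm : ∀ a b : zpowers x, a * b = b * a := fun a b => by letI := IsCyclic.commGroup (α := zpowers x); exact mul_comm a b
  -- fiber bound
  have hfiber_le : ∀ b, Nat.card {a // f a = b} ≤ p := by
    intro b
    set c' : zpowers x := ⟨(b.1.1 : G), hle b.1.1.2⟩ with hc'
    have key : ∀ a : {a // f a = b}, (a.1.1.1 : zpowers x) ^ p = c' := by
      intro a
      have h1 : ((f a.1).1.1 : G) = (b.1.1 : G) := by rw [a.2]
      exact Subtype.ext (by simpa [hf, hc'] using h1)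
    have hinj : Function.Injective
        (fun a : {a // f a = b} => (⟨a.1.1.1, key a⟩ : {h : zpowers x // h ^ p = c'})) := by
      intro a a' haa
      have h1 : a.1.1.1 = a'.1.1.1 := congrArg Subtype.val haa
      have h2 : a.1.1.2 = b.1.2 := congrArg (fun z => z.1.2) a.2
      have h3 : a'.1.1.2 = b.1.2 := congrArg (fun z => z.1.2) a'.2
      exact Subtype.ext (Subtype.ext (Prod.ext h1 (h2.trans h3.symm)))
    exact (Nat.card_le_card_of_injective _ hinj).trans (cardPowEqLe hcomm hp0 c')
  -- distinguished point with small fiber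
  have hxr_mem : x ^ r ∈ zpowers (x ^ p) := by
    refine mem_zpowers_iff.mpr ⟨((r / p : ℕ) : ℤ), ?_⟩
    rw [zpow_natCast, ← pow_mul, hrp]
  set b₀ : {q : (zpowers (x ^ p)) × G // (q.1 : G) * q.2 = q.2 * (q.1 : G)} :=
    ⟨(⟨x ^ r, hxr_mem⟩, g₀), (Subgroup.mem_center_iff.mp hxr_center g₀).symm⟩ with hb₀
  have hfiber_lt : Nat.card {a // f a = b₀} < p := by
    set c' : zpowers x := ⟨x ^ r, hle hxr_mem⟩ with hc'
    set h0' : zpowers x := ⟨h0, mem_zpowers_iff.mpr ⟨((r / p : ℕ) : ℤ), zpow_natCast x (r / p)⟩⟩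
      with hh0'
    have hh0p : h0' ^ p = c' := by
      refine Subtype.ext ?_
      show h0 ^ p = x ^ r
      rw [hh0, ← pow_mul, mul_comm, hrp]
    have key : ∀ a : {a // f a = b₀}, (a.1.1.1 : zpowers x) ^ p = c' ∧ a.1.1.1 ≠ h0' := by
      intro a
      have h1 : ((f a.1).1.1 : G) = (b₀.1.1 : G) := by rw [a.2]
      have h2 : a.1.1.2 = g₀ := congrArg (fun z => z.1.2) a.2
      refine ⟨Subtype.ext (by simpa [hf, hc', hb₀] using h1), ?_⟩
      intro hcon
      apply hg₀
      have hcm := a.1.2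
      rw [h2, hcon] at hcm
      exact hcm.symm
    have hinj : Function.Injective
        (fun a : {a // f a = b₀} =>
          (⟨a.1.1.1, key a⟩ : {h : zpowers x // h ^ p = c' ∧ h ≠ h0'})) := by
      intro a a' haa
      have h1 : a.1.1.1 = a'.1.1.1 := congrArg Subtype.val haa
      have h2 : a.1.1.2 = g₀ := congrArg (fun z => z.1.2) a.2
      have h3 : a'.1.1.2 = g₀ := congrArg (fun z => z.1.2) a'.2
      exact Subtype.ext (Subtype.ext (Prod.ext h1 (h2.trans h3.symm)))
    have hstep := Nat.card_le_card_of_injective _ hinj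
    -- card of restricted set is < p
    have hopt : Function.Injective
        (fun o : Option {h : zpowers x // h ^ p = c' ∧ h ≠ h0'} =>
          (o.elim (⟨h0', hh0p⟩ : {h : zpowers x // h ^ p = c'})
            (fun s => ⟨s.1, s.2.1⟩))) := by
      intro o o' hoo
      match o, o' with
      | none, none => rfl
      | none, some s => exact absurd (congrArg (fun z => z.1) hoo).symm s.2.2
      | some s, none => exact absurd (congrArg (fun z => z.1) hoo) s.2.2
      | some s, some t => exact congrArg some (Subtype.ext (congrArg (fun z => z.1) hoo))
    have hcard := Nat.card_le_card_of_injective _ hopt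
    have hoc : Nat.card (Option {h : zpowers x // h ^ p = c' ∧ h ≠ h0'}) =
        Nat.card {h : zpowers x // h ^ p = c' ∧ h ≠ h0'} + 1 := by
      simp [Nat.card_eq_fintype_card]
    rw [hoc] at hcard
    have : Nat.card {h : zpowers x // h ^ p = c' ∧ h ≠ h0'} + 1 ≤ p :=
      hcard.trans (cardPowEqLe hcomm hp0 c')
    omega
  have hN := cardLtOfFibers f p hfiber_le b₀ hfiber_lt
  -- final arithmetic
  have hm : p * orderOf (x ^ p) = orderOf x := by
    rw [orderOf_pow, Nat.gcd_eq_right hpn]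
    exact Nat.mul_div_cancel' hpn
  have hm0 : 0 < orderOf (x ^ p) := orderOf_pos _
  have hG0 : 0 < Nat.card G := Nat.card_pos
  unfold relCommDeg
  rw [Nat.card_zpowers, Nat.card_zpowers]
  rw [div_lt_div_iff₀ (by positivity) (by positivity)]
  have hnat : Nat.card {q : (zpowers x) × G // (q.1 : G) * q.2 = q.2 * (q.1 : G)} *
        (orderOf (x ^ p) * Nat.card G) <
      Nat.card {q : (zpowers (x ^ p)) × G // (q.1 : G) * q.2 = q.2 * (q.1 : G)} *
        (orderOf x * Nat.card G) := by
    calc Nat.card {q : (zpowers x) × G // (q.1 : G) * q.2 = q.2 * (q.1 : G)} *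
          (orderOf (x ^ p) * Nat.card G)
        < (p * Nat.card {q : (zpowers (x ^ p)) × G // (q.1 : G) * q.2 = q.2 * (q.1 : G)}) *
          (orderOf (x ^ p) * Nat.card G) :=
          (Nat.mul_lt_mul_right (by positivity)).mpr hN
      _ = Nat.card {q : (zpowers (x ^ p)) × G // (q.1 : G) * q.2 = q.2 * (q.1 : G)} *
          ((p * orderOf (x ^ p)) * Nat.card G) := by ring
      _ = _ := by rw [hm]
  exact_mod_cast hnat
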